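/- Fix 0 ≤ β < 1. With tilde_c_j^β = sum_{i=0}^{j} tilde_r_i β^i tilde_r_{j-i} and r_j, c_j^β as above, for every k ≥ 1: r_k (1-β) ≤ sum over j from 0 to k of tilde_c_j^β ≤ c_k^β (1-β), where c_k^β = sum_{j=0}^{k} β^{k-j} r_j r_{k-j}. -/

import Mathlib

/-- Generalized binomial coefficient `binom(x, k) = x(x-1)⋯(x-k+1)/k!`. -/
noncomputable def gbinom (x : ℝ) (k : ℕ) : ℝ :=
  (∏ i ∈ Finset.range k, (x - i)) / (Nat.factorial k)

noncomputable def r (j : ℕ) : ℝ := (Nat.choose (2*j) j : ℝ) / 4^j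

noncomputable def tr (j : ℕ) : ℝ := (-1)^j * gbinom (1/2) j

lemma r_zero : r 0 = 1 := by simp [r]

lemma r_pos (j : ℕ) : 0 < r j := by
  have := Nat.centralBinom_pos j
  rw [Nat.centralBinom] at this
  have h2 : (0:ℝ) < (Nat.choose (2*j) j : ℝ) := by exact_mod_cast this
  unfold r
  positivity

lemma r_rec (j : ℕ) : r (j+1) = r j * (2*j+1) / (2*j+2) := by
  have h := Nat.succ_mul_centralBinom_succ j
  rw [Nat.centralBinom, Nat.centralBinom] at h
  have h' : ((j:ℝ)+1) * (Nat.choose (2*(j+1)) (j+1) : ℝ) = 2*(2*j+1) * (Nat.choose (2*j) j : ℝ) := by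
    exact_mod_cast h
  have h4 : (4:ℝ)^(j+1) = 4^j * 4 := by ring
  unfold r
  rw [h4]
  have hj : ((j:ℝ)+1) ≠ 0 := by positivity
  have h4j : (4:ℝ)^j ≠ 0 := by positivity
  field_simp
  linear_combination 2 * h'

lemma r_le (j : ℕ) : r (j+1) ≤ r j := by
  rw [r_rec]
  have := r_pos j
  rw [div_le_iff₀ (by positivity)]
  nlinarith

lemma r_le_one (j : ℕ) : r j ≤ 1 := by
  induction j with
  | zero => simp [r_zero]
  | succ n ih => exact le_trans (r_le n) ih

lemma gbinom_succ (x : ℝ) (k : ℕ) : gbinom x (k+1) = gbinom x k * (x - k) / (k+1) := by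
  unfold gbinom
  rw [Finset.prod_range_succ, Nat.factorial_succ]
  push_cast
  have hk : ((k:ℝ)+1) ≠ 0 := by positivity
  have hf : ((Nat.factorial k : ℕ):ℝ) ≠ 0 := by
    exact_mod_cast Nat.factorial_ne_zero k
  field_simp

lemma tr_zero : tr 0 = 1 := by simp [tr, gbinom]

lemma tr_rec (j : ℕ) : tr (j+1) = tr j * ((j:ℝ) - 1/2) / (j+1) := by
  unfold tr
  rw [gbinom_succ]
  ring

lemma tr_eq (j : ℕ) : tr (j+1) = r (j+1) - r j := by
  induction j with
  | zero =>
    rw [tr_rec, tr_zero, r_rec, r_zero]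
    norm_num
  | succ n ih =>
    rw [tr_rec, ih]
    have h1 := r_rec n
    have h2 := r_rec (n+1)
    have hp := r_pos n
    push_cast at *
    rw [h2, h1]
    have hn1 : (2*(n:ℝ)+2) ≠ 0 := by positivity
    have hn2 : (2*(n:ℝ)+4) ≠ 0 := by positivity
    field_simp
    ring

lemma sum_tr (n : ℕ) : ∑ i ∈ Finset.range (n+1), tr i = r n := by
  induction n with
  | zero => simp [tr_zero, r_zero]
  | succ n ih => rw [Finset.sum_range_succ, ih, tr_eq]; ring

lemma conv_r (n : ℕ) : ∑ i ∈ Finset.range (n+1), r i * r (n-i) = 1 := by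
  induction n with
  | zero => simp [r_zero]
  | succ n ih =>
    have hne : ((n:ℝ)+1) ≠ 0 := by positivity
    apply mul_left_cancel₀ hne
    rw [mul_one, Finset.mul_sum]
    have hsplit : ∀ i ∈ Finset.range (n+2), ((n:ℝ)+1) * (r i * r (n+1-i))
        = (i:ℝ) * r i * r (n+1-i) + ((n+1-i : ℕ):ℝ) * r i * r (n+1-i) := by
      intro i hi
      have hile : i ≤ n+1 := Nat.lt_succ_iff.mp (Finset.mem_range.mp hi)
      have hc : ((n+1-i : ℕ):ℝ) = (n:ℝ)+1 - i := by
        rw [Nat.cast_sub hile]; push_cast; ring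
      rw [hc]; ring
    rw [Finset.sum_congr rfl hsplit, Finset.sum_add_distrib]
    have hA : ∑ i ∈ Finset.range (n+2), (i:ℝ) * r i * r (n+1-i)
        = ∑ i ∈ Finset.range (n+1), r i * r (n-i) * ((2*(i:ℝ)+1)/2) := by
      rw [Finset.sum_range_succ']
      simp only [Nat.cast_zero, zero_mul, add_zero]
      apply Finset.sum_congr rfl
      intro i _
      have hsub : n + 1 - (i+1) = n - i := by omega
      rw [hsub, r_rec]
      have : (2*(i:ℝ)+2) ≠ 0 := by positivity
      field_simp
      push_cast
      ring
    have hB : ∑ i ∈ Finset.range (n+2), ((n+1-i : ℕ):ℝ) * r i * r (n+1-i)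
        = ∑ i ∈ Finset.range (n+1), r i * r (n-i) * ((2*((n:ℝ)-i)+1)/2) := by
      rw [Finset.sum_range_succ]
      simp only [Nat.sub_self, Nat.cast_zero, zero_mul, add_zero]
      apply Finset.sum_congr rfl
      intro i hi
      have hile : i ≤ n := Nat.lt_succ_iff.mp (Finset.mem_range.mp hi)
      have hsub : n + 1 - i = (n - i) + 1 := by omega
      have hc : ((n-i+1 : ℕ):ℝ) = ((n:ℝ) - i) + 1 := by
        rw [Nat.cast_add, Nat.cast_sub hile]; push_cast; ring
      rw [hsub, hc, r_rec]
      have : (2*((n:ℝ)-(i:ℝ))+2) ≠ 0 := by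
        have : (i:ℝ) ≤ n := by exact_mod_cast hile
        nlinarith
      push_cast [Nat.cast_sub hile]
      have h1ni : ((n:ℝ) - (i:ℝ) + 1) ≠ 0 := by
        have : (i:ℝ) ≤ n := by exact_mod_cast hile
        linarith
      field_simp
    rw [hA, hB, ← Finset.sum_add_distrib]
    calc ∑ i ∈ Finset.range (n+1), (r i * r (n-i) * ((2*(i:ℝ)+1)/2) + r i * r (n-i) * ((2*((n:ℝ)-i)+1)/2))
        = ∑ i ∈ Finset.range (n+1), ((n:ℝ)+1) * (r i * r (n-i)) := by
          apply Finset.sum_congr rfl; intro i _; ring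
      _ = ((n:ℝ)+1) * ∑ i ∈ Finset.range (n+1), r i * r (n-i) := by rw [Finset.mul_sum]
      _ = (n:ℝ)+1 := by rw [ih, mul_one]

noncomputable def tc (β : ℝ) (j : ℕ) : ℝ :=
  ∑ i ∈ Finset.range (j + 1), tr i * β^i * tr (j - i)

noncomputable def c (β : ℝ) (k : ℕ) : ℝ :=
  ∑ j ∈ Finset.range (k + 1), β^(k - j) * r j * r (k - j)

noncomputable def cp (β : ℝ) (k : ℕ) : ℝ :=
  ∑ j ∈ Finset.range (k + 1), β^j * r j * r (k - j)

lemma c_eq_cp (β : ℝ) (k : ℕ) : c β k = cp β k := by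
  unfold c cp
  rw [← Finset.sum_range_reflect]
  apply Finset.sum_congr rfl
  intro j hj
  have hjk : j ≤ k := Nat.lt_succ_iff.mp (Finset.mem_range.mp hj)
  have h1 : k + 1 - 1 - j = k - j := by omega
  have h2 : k - (k - j) = j := by omega
  rw [h1, h2]
  ring

lemma S_eq (β : ℝ) (k : ℕ) :
    ∑ j ∈ Finset.range (k+1), tc β j = ∑ i ∈ Finset.range (k+1), tr i * β^i * r (k-i) := by
  induction k with
  | zero => simp [tc, tr_zero, r_zero]
  | succ k ih =>
    rw [Finset.sum_range_succ, ih]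
    have hrhs : ∑ i ∈ Finset.range (k+2), tr i * β^i * r (k+1-i)
        = (∑ i ∈ Finset.range (k+1), tr i * β^i * r (k-i)) + tc β (k+1) := by
      unfold tc
      rw [Finset.sum_range_succ, Finset.sum_range_succ (f := fun i => tr i * β^i * tr (k+1-i))]
      rw [Nat.sub_self, tr_zero, r_zero]
      have key : ∀ i ∈ Finset.range (k+1), tr i * β^i * r (k+1-i)
          = tr i * β^i * r (k-i) + tr i * β^i * tr (k+1-i) := by
        intro i hi
        have hik : i ≤ k := Nat.lt_succ_iff.mp (Finset.mem_range.mp hi)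
        have h1 : k + 1 - i = (k - i) + 1 := by omega
        rw [h1, tr_eq, ← h1]
        ring
      rw [Finset.sum_congr rfl key, Finset.sum_add_distrib]
      ring
    rw [hrhs]

lemma S_eq2 (β : ℝ) (m : ℕ) :
    ∑ i ∈ Finset.range (m+2), tr i * β^i * r (m+1-i) = cp β (m+1) - β * cp β m := by
  rw [Finset.sum_range_succ' (f := fun i => tr i * β^i * r (m+1-i))]
  simp only [tr_zero, pow_zero, Nat.sub_zero, one_mul, mul_one]
  unfold cp
  rw [Finset.sum_range_succ' (f := fun j => β^j * r j * r (m+1-j))]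
  simp only [r_zero, pow_zero, Nat.sub_zero, one_mul, mul_one]
  rw [Finset.mul_sum]
  have key : ∀ i ∈ Finset.range (m+1), tr (i+1) * β^(i+1) * r (m+1-(i+1))
      = β^(i+1) * r (i+1) * r (m+1-(i+1)) - β * (β^i * r i * r (m-i)) := by
    intro i hi
    have h1 : m + 1 - (i+1) = m - i := by omega
    rw [h1, tr_eq]
    ring
  rw [Finset.sum_congr rfl key, Finset.sum_sub_distrib]
  ring

lemma diff_sum (m : ℕ) : ∑ i ∈ Finset.range (m+1), (r i - r (i+1)) * r (m-i) = r (m+1) := by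
  have h1 := conv_r m
  have h2 := conv_r (m+1)
  rw [Finset.sum_range_succ' (f := fun i => r i * r (m+1-i))] at h2
  simp only [r_zero, Nat.sub_zero, one_mul] at h2
  have h2' : ∑ i ∈ Finset.range (m+1), r (i+1) * r (m-i) = 1 - r (m+1) := by
    have : ∀ i ∈ Finset.range (m+1), r (i+1) * r (m+1-(i+1)) = r (i+1) * r (m-i) := by
      intro i _
      congr 2
      omega
    rw [Finset.sum_congr rfl this] at h2
    linarith
  have : ∑ i ∈ Finset.range (m+1), (r i - r (i+1)) * r (m-i)
      = (∑ i ∈ Finset.range (m+1), r i * r (m-i)) - ∑ i ∈ Finset.range (m+1), r (i+1) * r (m-i) := by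
    rw [← Finset.sum_sub_distrib]
    apply Finset.sum_congr rfl
    intro i _
    ring
  rw [this, h1, h2']
  ring

lemma diff_sum' (m : ℕ) : ∑ i ∈ Finset.range (m+1), r i * (r (m-i) - r (m+1-i)) = r (m+1) := by
  have h1 := conv_r m
  have h2 := conv_r (m+1)
  rw [Finset.sum_range_succ] at h2
  rw [Nat.sub_self, r_zero, mul_one] at h2
  have : ∑ i ∈ Finset.range (m+1), r i * (r (m-i) - r (m+1-i))
      = (∑ i ∈ Finset.range (m+1), r i * r (m-i)) - ∑ i ∈ Finset.range (m+1), r i * r (m+1-i) := by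
    rw [← Finset.sum_sub_distrib]
    apply Finset.sum_congr rfl
    intro i _
    ring
  rw [this, h1]
  linarith

lemma left_ineq (β : ℝ) (hβ0 : 0 ≤ β) (hβ1 : β ≤ 1) (m : ℕ) :
    r (m+1) * (1-β) ≤ cp β (m+1) - β * cp β m := by
  have e1 : cp β (m+1) - β * cp β m
      = r (m+1) - ∑ i ∈ Finset.range (m+1), β^(i+1) * ((r i - r (i+1)) * r (m-i)) := by
    unfold cp
    rw [Finset.sum_range_succ' (f := fun j => β^j * r j * r ((m+1) - j))]
    simp only [r_zero, pow_zero, Nat.sub_zero, one_mul, mul_one]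
    rw [Finset.mul_sum]
    have key : ∀ i ∈ Finset.range (m+1),
        β^(i+1) * r (i+1) * r (m+1-(i+1)) - β * (β^i * r i * r (m-i))
        = - (β^(i+1) * ((r i - r (i+1)) * r (m-i))) := by
      intro i hi
      have h1 : m + 1 - (i+1) = m - i := by omega
      rw [h1]
      ring
    have hAB := Finset.sum_congr rfl key
    rw [Finset.sum_sub_distrib, Finset.sum_neg_distrib] at hAB
    linarith
  have hb : ∑ i ∈ Finset.range (m+1), β^(i+1) * ((r i - r (i+1)) * r (m-i))
      ≤ ∑ i ∈ Finset.range (m+1), β * ((r i - r (i+1)) * r (m-i)) := by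
    apply Finset.sum_le_sum
    intro i _
    have hfac : 0 ≤ (r i - r (i+1)) * r (m-i) :=
      mul_nonneg (by linarith [r_le i]) (r_pos (m-i)).le
    apply mul_le_mul_of_nonneg_right _ hfac
    calc β^(i+1) = β * β^i := by ring
      _ ≤ β * 1 := by
        apply mul_le_mul_of_nonneg_left _ hβ0
        exact pow_le_one₀ hβ0 hβ1
      _ = β := by ring
  have hsum : ∑ i ∈ Finset.range (m+1), β * ((r i - r (i+1)) * r (m-i)) = β * r (m+1) := by
    rw [← Finset.mul_sum, diff_sum]
  rw [e1]
  rw [hsum] at hb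
  nlinarith [r_pos (m+1)]

lemma cp_antitone (β : ℝ) (hβ0 : 0 ≤ β) (hβ1 : β ≤ 1) (m : ℕ) :
    cp β (m+1) ≤ cp β m := by
  have e1 : cp β (m+1)
      = ∑ j ∈ Finset.range (m+1), β^j * r j * r (m+1-j) + β^(m+1) * r (m+1) := by
    unfold cp
    rw [Finset.sum_range_succ, Nat.sub_self, r_zero, mul_one]
  have e2 : cp β m - cp β (m+1)
      = ∑ j ∈ Finset.range (m+1), β^j * (r j * (r (m-j) - r (m+1-j))) - β^(m+1) * r (m+1) := by
    rw [e1]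
    unfold cp
    have key : ∀ j ∈ Finset.range (m+1),
        β^j * r j * r (m-j) - β^j * r j * r (m+1-j)
        = β^j * (r j * (r (m-j) - r (m+1-j))) := by
      intro j _; ring
    have hAB := Finset.sum_congr rfl key
    rw [Finset.sum_sub_distrib] at hAB
    linarith
  have hb : ∑ j ∈ Finset.range (m+1), β^m * (r j * (r (m-j) - r (m+1-j)))
      ≤ ∑ j ∈ Finset.range (m+1), β^j * (r j * (r (m-j) - r (m+1-j))) := by
    apply Finset.sum_le_sum
    intro j hj
    have hjm : j ≤ m := Nat.lt_succ_iff.mp (Finset.mem_range.mp hj)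
    have hstep : r (m+1-j) ≤ r (m-j) := by
      have h1 : m + 1 - j = (m - j) + 1 := by omega
      rw [h1]; exact r_le (m-j)
    have hfac : 0 ≤ r j * (r (m-j) - r (m+1-j)) :=
      mul_nonneg (r_pos j).le (by linarith)
    exact mul_le_mul_of_nonneg_right (pow_le_pow_of_le_one hβ0 hβ1 hjm) hfac
  have hsum : ∑ j ∈ Finset.range (m+1), β^m * (r j * (r (m-j) - r (m+1-j)))
      = β^m * r (m+1) := by
    rw [← Finset.mul_sum, diff_sum']
  have hβm : (0:ℝ) ≤ β^m := pow_nonneg hβ0 m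
  have hr : 0 < r (m+1) := r_pos (m+1)
  have hpow : β^(m+1) ≤ β^m := pow_le_pow_of_le_one hβ0 hβ1 (Nat.le_succ m)
  have hpow' : β^(m+1) * r (m+1) ≤ β^m * r (m+1) :=
    mul_le_mul_of_nonneg_right hpow hr.le
  linarith

theorem stmt_12 (β : ℝ) (hβ0 : 0 ≤ β) (hβ1 : β < 1) (k : ℕ) (hk : 1 ≤ k) :
    r k * (1 - β) ≤ ∑ j ∈ Finset.range (k + 1), tc β j ∧
      ∑ j ∈ Finset.range (k + 1), tc β j ≤ c β k * (1 - β) := by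
  obtain ⟨m, rfl⟩ : ∃ m, k = m + 1 := ⟨k - 1, by omega⟩
  have hS : ∑ j ∈ Finset.range (m+1+1), tc β j = cp β (m+1) - β * cp β m := by
    rw [S_eq, S_eq2]
  have hβ1' : β ≤ 1 := hβ1.le
  constructor
  · rw [hS]
    exact left_ineq β hβ0 hβ1' m
  · rw [hS, c_eq_cp]
    have h1 : cp β (m+1) ≤ cp β m := cp_antitone β hβ0 hβ1' m
    have h2 : β * cp β (m+1) ≤ β * cp β m := mul_le_mul_of_nonneg_left h1 hβ0
    linarith
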